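/- Let F be a field of characteristic 0 and let Γ_n(UT_2) denote the space of multilinear proper polynomials of degree n modulo the polynomial identities of UT_2(F). For n ≥ 2, the left-normed commutators [x_{σ(1)}, x_{σ(2)}, x_3, ..., x_n] where σ ranges over orderings with first index greater than second and remaining indices increasing — i.e. the commutators [x_{i_1}, x_{i_2}, ..., x_{i_n}] with i_1 > i_2 < i_3 < ... < i_n — form a linearly independent set of size n-1 in UT_2-valued multilinear functions; equivalently, the dimension of the proper multilinear component of the relatively free algebra of UT_2(F) in degree n is n - 1. -/
import Mathlib


/-- Left-normed iterated commutator `[a, l₁, l₂, …]` with `[a,b] = ab - ba`. -/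
def lcomm16 {A : Type*} [Ring A] (a : A) (l : List A) : A :=
  l.foldl (fun u v => u * v - v * u) a

lemma lcomm16_zero {A : Type*} [Ring A] (l : List A) : lcomm16 (0 : A) l = 0 := by
  unfold lcomm16
  induction l with
  | nil => rfl
  | cons h t ih => simpa using ih

lemma lcomm16_const {A : Type*} [Ring A] (E D : A) (h : E * D - D * E = E) :
    ∀ l : List A, (∀ a ∈ l, a = D) → lcomm16 E l = E := by
  intro l
  unfold lcomm16
  induction l with
  | nil => intro _; rfl
  | cons a t ih =>
      intro hm
      have ha : a = D := hm a (by simp)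
      simp only [List.foldl_cons, ha, h]
      exact ih (fun b hb => hm b (by simp [hb]))

/-- For `n ≥ 2`, the `n - 1` semistandard left-normed commutators
`[x_v, x_0, x_{j₁}, …]` (`v ≠ 0`, remaining indices in increasing order), viewed as
multilinear functions on upper-triangular `2×2` matrices, are linearly independent;
the proper multilinear component of the relatively free algebra of `UT₂(F)` in degree `n`
has dimension `n - 1`. -/
theorem stmt16 (F : Type) [Field F] [CharZero F] (n : ℕ) (hn : 2 ≤ n) :
    let i0 : Fin n := ⟨0, by omega⟩
    (Finset.univ.filter (fun v : Fin n => v ≠ i0)).card = n - 1 ∧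
    ∀ c : Fin n → F,
      (∀ x : Fin n → Matrix (Fin 2) (Fin 2) F,
          (∀ i : Fin n, ∀ p q : Fin 2, q < p → x i p q = 0) →
          ∑ v ∈ Finset.univ.filter (fun v : Fin n => v ≠ i0),
            c v • lcomm16 (x v * x i0 - x i0 * x v)
              (((List.finRange n).filter (fun j => !(j == v || j == i0))).map x) = 0) →
      ∀ v : Fin n, v ≠ i0 → c v = 0 := by
  intro i0
  constructor
  · rw [Finset.filter_ne', Finset.card_erase_of_mem (Finset.mem_univ _),
      Finset.card_univ, Fintype.card_fin]
  · intro c hc v hv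
    set E : Matrix (Fin 2) (Fin 2) F := !![0,1;0,0] with hE
    set D : Matrix (Fin 2) (Fin 2) F := !![0,0;0,1] with hD
    have hED : E * D - D * E = E := by
      ext i j
      fin_cases i <;> fin_cases j <;> simp [hE, hD, Matrix.mul_apply, Fin.sum_univ_two]
    set x : Fin n → Matrix (Fin 2) (Fin 2) F := fun j => if j = v then E else D with hx
    have hupper : ∀ i : Fin n, ∀ p q : Fin 2, q < p → x i p q = 0 := by
      intro i p q hpq
      have hp : p = 1 := by omega
      have hq : q = 0 := by omega
      subst hp; subst hq
      by_cases h : i = v <;> simp [hx, h, hE, hD]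
    have hsum := hc x hupper
    have hxv : x v = E := by simp [hx]
    have hx0 : x i0 = D := by
      have : i0 ≠ v := fun h => hv h.symm
      simp [hx, this]
    rw [Finset.sum_eq_single v] at hsum
    · -- the v-term
      have hlist : ∀ a ∈ ((List.finRange n).filter
          (fun j => !(j == v || j == i0))).map x, a = D := by
        intro a ha
        rcases List.mem_map.mp ha with ⟨j, hj, rfl⟩
        rcases List.mem_filter.mp hj with ⟨-, hcond⟩
        have hjv : j ≠ v := by
          intro h; subst h; simp at hcond
        simp [hx, hjv]
      rw [hxv, hx0, hED, lcomm16_const E D hED _ hlist] at hsum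
      have h01 := congrFun (congrFun hsum 0) 1
      simpa [hE] using h01
    · -- other terms vanish
      intro w hw hwv
      have hxw : x w = D := by simp [hx, hwv]
      rw [hxw, hx0]
      simp [lcomm16_zero]
    · intro h
      exact absurd (Finset.mem_filter.mpr ⟨Finset.mem_univ v, hv⟩) h
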